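/- Define W(n) = n*ceil(log2 n) - 2^(ceil(log2 n)) + 1 and let B satisfy the MergeSort best-case recurrence B(1)=0, B(n)=floor(n/2)+B(floor(n/2))+B(ceil(n/2)) for n >= 2. Then for every positive natural number n, (n-1)/2 <= 2*B(n) - W(n) <= n - 1. -/

import Mathlib

lemma ceil_half (n : ℕ) : (⌈(n : ℚ) / 2⌉).toNat = (n+1)/2 := by
  rcases Nat.even_or_odd n with ⟨m, hm⟩ | ⟨m, hm⟩
  · subst hm
    have : ((m + m : ℕ) : ℚ)/2 = (m:ℚ) := by push_cast; ring
    rw [this]; simp; omega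
  · subst hm
    have : ((2*m+1 : ℕ) : ℚ)/2 = (m:ℚ) + 1/2 := by push_cast; ring
    rw [this]
    rw [show ((m:ℚ) + 1/2) = 1/2 + ((m:ℤ):ℚ) by push_cast; ring, Int.ceil_add_intCast]
    rw [show ⌈(1:ℚ)/2⌉ = 1 by norm_num [Int.ceil_eq_iff]]
    omega

lemma clog_step {n : ℕ} (hn : 2 ≤ n) : Nat.clog 2 n = Nat.clog 2 ((n+1)/2) + 1 := by
  rw [Nat.clog_of_two_le one_lt_two hn]
  congr 2

lemma clog_pow2 (k : ℕ) : Nat.clog 2 (2^k) = k := Nat.clog_pow 2 k one_lt_two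

lemma clog_pow2_succ (k : ℕ) : Nat.clog 2 (2^k + 1) = k + 1 := by
  apply le_antisymm
  · rw [Nat.clog_le_iff_le_pow one_lt_two, pow_succ]
    have := Nat.one_le_two_pow (n := k)
    omega
  · exact (Nat.lt_clog_iff_pow_lt one_lt_two).mpr (by omega)

lemma clog_succ_of_not_pow {a : ℕ} (h : ∀ k, a ≠ 2^k) :
    Nat.clog 2 (a+1) = Nat.clog 2 a := by
  apply le_antisymm
  · rw [Nat.clog_le_iff_le_pow one_lt_two]
    have h1 := Nat.le_pow_clog one_lt_two a
    have h2 := h (Nat.clog 2 a)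
    omega
  · exact Nat.clog_mono_right 2 (Nat.le_succ a)

theorem aux (B : ℕ → ℕ) (hB1 : B 1 = 0)
    (hB : ∀ n, 2 ≤ n → B n = n / 2 + B (n / 2) + B ((⌈(n : ℚ) / 2⌉).toNat))
    (W : ℕ → ℚ) (hW : ∀ n, W n = (n : ℚ) * Nat.clog 2 n - 2 ^ Nat.clog 2 n + 1) :
    ∀ n : ℕ, 0 < n →
      (((n : ℚ) - 1) / 2 ≤ 2 * (B n : ℚ) - W n) ∧ (2 * (B n : ℚ) - W n ≤ (n : ℚ) - 1) ∧
      (n % 2 = 0 → (n : ℚ) / 2 ≤ 2 * (B n : ℚ) - W n) ∧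
      (∀ k, n = 2 ^ k → 2 * (B n : ℚ) - W n = (n : ℚ) - 1) := by
  intro n
  induction n using Nat.strong_induction_on with
  | _ n ih =>
  intro hn
  rcases eq_or_lt_of_le (Nat.succ_le_of_lt hn) with h1 | hn2
  · -- n = 1
    have hn1 : n = 1 := h1.symm
    subst hn1
    have hc : Nat.clog 2 1 = 0 := Nat.clog_one_right 2
    have hg : 2 * (B 1 : ℚ) - W 1 = 0 := by
      rw [hW 1, hc, hB1]; norm_num
    refine ⟨by rw [hg]; norm_num, by rw [hg]; norm_num, by omega, fun k hk => by rw [hg]; norm_num⟩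
  · -- n ≥ 2
    have hn2' : 2 ≤ n := hn2
    set a := n / 2 with ha
    set b := (n+1) / 2 with hb
    have hab : a + b = n := by omega
    have ha1 : 1 ≤ a := by omega
    have hbn : b < n := by omega
    have han : a < n := by omega
    have hBn : (B n : ℚ) = (a : ℚ) + B a + B b := by
      rw [hB n hn2', ceil_half]; push_cast; ring
    have hcn : Nat.clog 2 n = Nat.clog 2 b + 1 := clog_step hn2'
    have iha := ih a han (by omega)
    have ihb := ih b hbn (by omega)
    rcases Nat.even_or_odd n with ⟨m, hm⟩ | ⟨m, hm⟩
    · -- n even, n = 2a, b = a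
      have hba : b = a := by omega
      have hna : n = 2 * a := by omega
      have hcq : Nat.clog 2 n = Nat.clog 2 a + 1 := by rw [hcn, hba]
      have key : 2 * (B n : ℚ) - W n = 2 * (2 * (B a : ℚ) - W a) + 1 := by
        rw [hW n, hW a, hcq, hBn, hba]
        have hnq : (n : ℚ) = 2 * a := by exact_mod_cast congrArg (Nat.cast : ℕ → ℚ) hna
        rw [hnq]
        push_cast [pow_succ]
        ring
      obtain ⟨l1, l2, _, l4⟩ := iha
      have hnq : (n : ℚ) = 2 * a := by exact_mod_cast congrArg (Nat.cast : ℕ → ℚ) hna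
      have haq : (1:ℚ) ≤ a := by exact_mod_cast ha1
      refine ⟨?_, ?_, fun _ => ?_, fun k hk => ?_⟩
      · rw [key, hnq]; linarith
      · rw [key, hnq]; linarith
      · rw [key, hnq]; linarith
      · -- n = 2^k, so a = 2^(k-1)
        have hk1 : 1 ≤ k := by
          rcases k with _ | k
          · simp at hk; omega
          · omega
        have hak : a = 2 ^ (k-1) := by
          have : 2 ^ k = 2 * 2 ^ (k-1) := by
            rw [← pow_succ']
            congr 1
            omega
          omega
        have := l4 (k-1) hak
        rw [key, hnq, this]
        ring
    · -- n odd, n = 2a+1, b = a+1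
      have hna : n = 2 * a + 1 := by omega
      have hba : b = a + 1 := by omega
      have hnq : (n : ℚ) = 2 * a + 1 := by exact_mod_cast congrArg (Nat.cast : ℕ → ℚ) hna
      have hbq : (b : ℚ) = a + 1 := by exact_mod_cast congrArg (Nat.cast : ℕ → ℚ) hba
      have hnotpow : ∀ k, n ≠ 2 ^ k := by
        intro k hk
        rcases k with _ | k
        · simp at hk; omega
        · have : 2 ^ (k+1) = 2 * 2^k := by rw [pow_succ]; ring
          omega
      obtain ⟨a1, a2, a3, a4⟩ := iha
      obtain ⟨b1, b2, b3, b4⟩ := ihb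
      have key : 2 * (B n : ℚ) - W n = (2 * (B a : ℚ) - W a) + (2 * (B b : ℚ) - W b) := by
        by_cases hpow : ∃ k, a = 2 ^ k
        · obtain ⟨k, hk⟩ := hpow
          have hca : Nat.clog 2 a = k := by rw [hk]; exact clog_pow2 k
          have hcb : Nat.clog 2 b = k + 1 := by rw [hba, hk]; exact clog_pow2_succ k
          have hcnn : Nat.clog 2 n = k + 2 := by rw [hcn, hcb]
          have haq : (a : ℚ) = 2 ^ k := by rw [hk]; push_cast; ring
          rw [hW n, hW a, hW b, hca, hcb, hcnn, hBn, hnq, hbq, haq]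
          push_cast [pow_succ]
          ring
        · push_neg at hpow
          have hca : Nat.clog 2 b = Nat.clog 2 a := by
            rw [hba]; exact clog_succ_of_not_pow hpow
          have hcnn : Nat.clog 2 n = Nat.clog 2 a + 1 := by rw [hcn, hca]
          rw [hW n, hW a, hW b, hca, hcnn, hBn, hnq, hbq]
          push_cast [pow_succ]
          ring
      refine ⟨?_, ?_, fun he => ?_, fun k hk => absurd hk (hnotpow k)⟩
      · -- lower bound
        rw [key]
        by_cases hpow : ∃ k, a = 2 ^ k
        · obtain ⟨k, hk⟩ := hpow
          have hga : 2 * (B a : ℚ) - W a = (a : ℚ) - 1 := a4 k hk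
          rcases Nat.lt_or_ge a 2 with h | h
          · -- a = 1, b = 2
            have ha' : a = 1 := by omega
            have hgb : 2 * (B b : ℚ) - W b = (b : ℚ) - 1 := b4 1 (by omega)
            rw [hga, hgb, hnq, hbq, ha']
            norm_num
          · have haq2 : (2:ℚ) ≤ a := by exact_mod_cast h
            rw [hga, hnq]
            have := b1
            rw [hbq] at this
            linarith
        · -- a not a power of 2; a, b consecutive, one even
          rcases Nat.even_or_odd a with hae | hao
          · have h3 := a3 (Nat.even_iff.mp hae)
            have hb1 := b1
            rw [hbq] at hb1
            rw [hnq]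
            linarith
          · have hb2 : b % 2 = 0 := by
              have := Nat.odd_iff.mp hao
              omega
            have h3 := b3 hb2
            rw [hbq] at h3
            rw [hnq]
            linarith
      · rw [key, hnq]
        rw [hbq] at b2
        linarith
      · omega

theorem twoB_sub_W_bounds (B : ℕ → ℕ) (hB1 : B 1 = 0)
    (hB : ∀ n, 2 ≤ n → B n = n / 2 + B (n / 2) + B ((⌈(n : ℚ) / 2⌉).toNat))
    (W : ℕ → ℚ) (hW : ∀ n, W n = (n : ℚ) * Nat.clog 2 n - 2 ^ Nat.clog 2 n + 1) :
    ∀ n : ℕ, 0 < n →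
      ((n : ℚ) - 1) / 2 ≤ 2 * (B n : ℚ) - W n ∧ 2 * (B n : ℚ) - W n ≤ (n : ℚ) - 1 := by
  intro n hn
  obtain ⟨h1, h2, _, _⟩ := aux B hB1 hB W hW n hn
  exact ⟨h1, h2⟩
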